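/- Fix t > 0 and let (μ_t) be an ATS mixing family. Suppose I : ℝ → (0,∞) is differentiable at 0 and satisfies, for all y in a neighborhood of 0, the implied volatility equation ∫ c_t(z,y) dμ_t(z) = N(−y/I(y) + I(y)·√t/2) − e^{y·√t}·N(−y/I(y) − I(y)·√t/2), where c_t(z,y) := e^{φ_t·t − t·σ̄²·η_t·z}·N(−y/(σ̄·√z) + l_t^z + σ̄·√(z·t)/2) − e^{y·√t}·N(−y/(σ̄·√z) + l_t^z − σ̄·√(z·t)/2). Then I′(0) = [ N(−I(0)·√t/2) − ∫ N(l_t^z − σ̄·√(z·t)/2) dμ_t(z) ] / N′(−I(0)·√t/2). -/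

import Mathlib

open MeasureTheory Real Filter Set Topology Asymptotics

/-- The ATS Laplace transform `L_t(u)` with parameters `α ∈ (0,1)`, `k̄ > 0`, `β ∈ ℝ`,
where `k_t = k̄·t^β`. -/
noncomputable def ATSLaplace (α kbar β : ℝ) (t u : ℝ) : ℝ :=
  Real.exp ((t / (kbar * t ^ β)) * ((1 - α) / α) *
    (1 - (1 + u * (kbar * t ^ β) / ((1 - α) * t)) ^ α))

/-- Standard normal cumulative distribution function. -/
noncomputable def stdN (z : ℝ) : ℝ :=
  (Real.sqrt (2 * Real.pi))⁻¹ * ∫ x in Set.Iic z, Real.exp (-x ^ 2 / 2)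

/-- Standard normal probability density function. -/
noncomputable def stdNd (z : ℝ) : ℝ :=
  (Real.sqrt (2 * Real.pi))⁻¹ * Real.exp (-z ^ 2 / 2)

/-- The drift `φ_t`, defined by `φ_t·t = −ln L_t(t·σ̄²·η_t)` with `η_t = η̄·t^δ`. -/
noncomputable def ATSphi (α kbar σbar ηbar β δ : ℝ) (t : ℝ) : ℝ :=
  -Real.log (ATSLaplace α kbar β t (t * σbar ^ 2 * (ηbar * t ^ δ))) / t

/-- The quantity `l_t^z = −σ̄·η_t·√(z·t) + φ_t·√t/(σ̄·√z)`. -/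
noncomputable def ATSl (α kbar σbar ηbar β δ : ℝ) (t z : ℝ) : ℝ :=
  -(σbar * (ηbar * t ^ δ)) * Real.sqrt (z * t) +
    ATSphi α kbar σbar ηbar β δ t * Real.sqrt t / (σbar * Real.sqrt z)

/-- The ATM ATS call price `C_t`. -/
noncomputable def ATSCall (α kbar σbar ηbar β δ : ℝ) (μ : Measure ℝ) (t : ℝ) : ℝ :=
  ∫ z, (Real.exp (ATSphi α kbar σbar ηbar β δ t * t - t * σbar ^ 2 * (ηbar * t ^ δ) * z) *
      stdN (ATSl α kbar σbar ηbar β δ t z + σbar * Real.sqrt (z * t) / 2) -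
      stdN (ATSl α kbar σbar ηbar β δ t z - σbar * Real.sqrt (z * t) / 2)) ∂μ

/-- The skew term `ξ̂_t`. -/
noncomputable def ATSSkew (α kbar σbar ηbar β δ : ℝ) (μ : Measure ℝ) (σhat : ℝ → ℝ)
    (t : ℝ) : ℝ :=
  (stdN (-(σhat t * Real.sqrt t / 2)) -
      ∫ z, stdN (ATSl α kbar σbar ηbar β δ t z - σbar * Real.sqrt (z * t) / 2) ∂μ) /
    stdNd (-(σhat t * Real.sqrt t / 2))


lemma gauss_integrable : Integrable (fun x : ℝ => Real.exp (-x ^ 2 / 2)) := by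
  have h := integrable_exp_neg_mul_sq (b := (1:ℝ)/2) (by norm_num)
  convert h using 2 with x
  ring_nf

lemma hasDerivAt_stdN (x : ℝ) : HasDerivAt stdN (stdNd x) x := by
  have hint := gauss_integrable
  have key : ∀ y : ℝ, stdN y = (Real.sqrt (2 * Real.pi))⁻¹ *
      ((∫ u in Set.Iic (0:ℝ), Real.exp (-u ^ 2 / 2)) + ∫ u in (0:ℝ)..y, Real.exp (-u ^ 2 / 2)) := by
    intro y
    rw [stdN, ← intervalIntegral.integral_Iic_sub_Iic hint.integrableOn hint.integrableOn]
    ring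
  have h1 : HasDerivAt (fun y : ℝ => ∫ u in (0:ℝ)..y, Real.exp (-u ^ 2 / 2))
      (Real.exp (-x ^ 2 / 2)) x := by
    refine intervalIntegral.integral_hasDerivAt_right hint.intervalIntegrable ?_ ?_
    · exact hint.aestronglyMeasurable.stronglyMeasurableAtFilter
    · exact (Real.continuous_exp.comp (by continuity)).continuousAt
  have h2 := ((h1.const_add (∫ u in Set.Iic (0:ℝ), Real.exp (-u ^ 2 / 2))).const_mul
    ((Real.sqrt (2 * Real.pi))⁻¹))
  exact h2.congr_of_eventuallyEq (by filter_upwards with y using key y)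

lemma continuous_stdN : Continuous stdN :=
  continuous_iff_continuousAt.2 fun x => (hasDerivAt_stdN x).continuousAt

lemma stdN_nonneg (x : ℝ) : 0 ≤ stdN x := by
  apply mul_nonneg (inv_nonneg.2 (Real.sqrt_nonneg _))
  exact setIntegral_nonneg measurableSet_Iic fun u _ => (Real.exp_pos _).le

lemma stdN_le_one (x : ℝ) : stdN x ≤ 1 := by
  have htot : (∫ u : ℝ, Real.exp (-u ^ 2 / 2)) = Real.sqrt (2 * Real.pi) := by
    have h := integral_gaussian ((1:ℝ)/2)
    rw [show (Real.pi / (1/2)) = 2 * Real.pi by ring] at h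
    rw [← h]
    congr 1 with u
    ring_nf
  have hle : (∫ u in Set.Iic x, Real.exp (-u ^ 2 / 2)) ≤ ∫ u : ℝ, Real.exp (-u ^ 2 / 2) :=
    setIntegral_le_integral gauss_integrable (by filter_upwards with u using (Real.exp_pos _).le)
  have hpos : (0:ℝ) < Real.sqrt (2 * Real.pi) :=
    Real.sqrt_pos.2 (by positivity)
  rw [stdN]
  calc (Real.sqrt (2 * Real.pi))⁻¹ * ∫ u in Set.Iic x, Real.exp (-u ^ 2 / 2)
      ≤ (Real.sqrt (2 * Real.pi))⁻¹ * Real.sqrt (2 * Real.pi) := by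
        apply mul_le_mul_of_nonneg_left _ (inv_nonneg.2 hpos.le)
        rw [← htot]; exact hle
    _ = 1 := inv_mul_cancel₀ hpos.ne'

lemma stdNd_pos (x : ℝ) : 0 < stdNd x := by
  have : (0:ℝ) < Real.sqrt (2 * Real.pi) := Real.sqrt_pos.2 (by positivity)
  exact mul_pos (inv_pos.2 this) (Real.exp_pos _)

lemma stdNd_neg (x : ℝ) : stdNd (-x) = stdNd x := by
  simp [stdNd, neg_pow]

lemma exp_arg_id (σ η φ s u y : ℝ) (hσ : σ ≠ 0) (hs : s ≠ 0) :
    φ * (u*u) - (u*u) * σ ^ 2 * η * (s*s) +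
      (-(-(y / (σ * s)) + (-(σ * η) * (s * u) + φ * u / (σ * s)) + σ * (s * u) / 2) ^ 2 / 2)
    = y * u +
      (-(-(y / (σ * s)) + (-(σ * η) * (s * u) + φ * u / (σ * s)) - σ * (s * u) / 2) ^ 2 / 2) := by
  field_simp
  ring

lemma hasDerivAt_integrand (α kbar σbar ηbar β δ t : ℝ) (hσ : 0 < σbar) (ht : 0 ≤ t)
    (z y : ℝ) :
    HasDerivAt (fun y : ℝ =>
      Real.exp (ATSphi α kbar σbar ηbar β δ t * t - t * σbar ^ 2 * (ηbar * t ^ δ) * z) *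
        stdN (-(y / (σbar * Real.sqrt z)) + ATSl α kbar σbar ηbar β δ t z +
          σbar * Real.sqrt (z * t) / 2) -
      Real.exp (y * Real.sqrt t) *
        stdN (-(y / (σbar * Real.sqrt z)) + ATSl α kbar σbar ηbar β δ t z -
          σbar * Real.sqrt (z * t) / 2))
      (-Real.sqrt t * Real.exp (y * Real.sqrt t) *
        stdN (-(y / (σbar * Real.sqrt z)) + ATSl α kbar σbar ηbar β δ t z -
          σbar * Real.sqrt (z * t) / 2)) y := by
  set φ := ATSphi α kbar σbar ηbar β δ t with hφ
  set l := ATSl α kbar σbar ηbar β δ t z with hl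
  set a := σbar * Real.sqrt (z * t) / 2 with ha
  set E := Real.exp (φ * t - t * σbar ^ 2 * (ηbar * t ^ δ) * z) with hE
  set D := σbar * Real.sqrt z with hD
  have h0 : HasDerivAt (fun y : ℝ => -(y / D) + l) (-(1 / D)) y :=
    (((hasDerivAt_id y).div_const D).neg).add_const l
  have h1 : HasDerivAt (fun y : ℝ => -(y / D) + l + a) (-(1 / D)) y := h0.add_const a
  have h2 : HasDerivAt (fun y : ℝ => -(y / D) + l - a) (-(1 / D)) y := h0.sub_const a
  have hplus : HasDerivAt (fun y : ℝ => stdN (-(y / D) + l + a))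
      (stdNd (-(y / D) + l + a) * -(1 / D)) y :=
    (hasDerivAt_stdN _).comp y h1
  have hminus : HasDerivAt (fun y : ℝ => stdN (-(y / D) + l - a))
      (stdNd (-(y / D) + l - a) * -(1 / D)) y :=
    (hasDerivAt_stdN _).comp y h2
  have hexp : HasDerivAt (fun y : ℝ => Real.exp (y * Real.sqrt t))
      (Real.exp (y * Real.sqrt t) * Real.sqrt t) y :=
    by simpa using ((hasDerivAt_id y).mul_const (Real.sqrt t)).exp
  have total := (hplus.const_mul E).sub (hexp.mul hminus)
  have hkey : E * stdNd (-(y / D) + l + a) * D⁻¹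
      = Real.exp (y * Real.sqrt t) * stdNd (-(y / D) + l - a) * D⁻¹ := by
    rcases le_or_gt z 0 with hz | hz
    · have hsz : Real.sqrt z = 0 := Real.sqrt_eq_zero'.2 hz
      simp [hD, hsz]
    · have hs : (0:ℝ) < Real.sqrt z := Real.sqrt_pos.2 hz
      have hz2 : Real.sqrt z * Real.sqrt z = z := Real.mul_self_sqrt hz.le
      have ht2 : Real.sqrt t * Real.sqrt t = t := Real.mul_self_sqrt ht
      have hzt : Real.sqrt (z * t) = Real.sqrt z * Real.sqrt t := Real.sqrt_mul hz.le t
      have harg := exp_arg_id σbar (ηbar * t ^ δ) φ (Real.sqrt z) (Real.sqrt t) y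
        hσ.ne' hs.ne'
      rw [hz2, ht2] at harg
      have hEq : φ * t - t * σbar ^ 2 * (ηbar * t ^ δ) * z +
          (-(-(y / D) + l + a) ^ 2 / 2) = y * Real.sqrt t + (-(-(y / D) + l - a) ^ 2 / 2) := by
        rw [hl, ha, hD, ATSl, ← hφ, hzt]
        linarith [harg]
      rw [hE, stdNd, stdNd]
      calc Real.exp (φ * t - t * σbar ^ 2 * (ηbar * t ^ δ) * z) *
            ((Real.sqrt (2 * Real.pi))⁻¹ * Real.exp (-(-(y / D) + l + a) ^ 2 / 2)) * D⁻¹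
          = (Real.sqrt (2 * Real.pi))⁻¹ * D⁻¹ *
              Real.exp (φ * t - t * σbar ^ 2 * (ηbar * t ^ δ) * z +
                (-(-(y / D) + l + a) ^ 2 / 2)) := by rw [Real.exp_add]; ring
        _ = (Real.sqrt (2 * Real.pi))⁻¹ * D⁻¹ *
              Real.exp (y * Real.sqrt t + (-(-(y / D) + l - a) ^ 2 / 2)) := by rw [hEq]
        _ = Real.exp (y * Real.sqrt t) *
              ((Real.sqrt (2 * Real.pi))⁻¹ * Real.exp (-(-(y / D) + l - a) ^ 2 / 2)) * D⁻¹ := by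
            rw [Real.exp_add]; ring
  exact total.congr_deriv (by linear_combination -hkey)

lemma measurable_arg (α kbar σbar ηbar β δ t : ℝ) (y c : ℝ) :
    Measurable (fun z : ℝ => -(y / (σbar * Real.sqrt z)) + ATSl α kbar σbar ηbar β δ t z +
      c * Real.sqrt (z * t)) := by
  unfold ATSl
  fun_prop

/-- the skew formula obtained via the implicit function theorem: if the
implied volatility `I` is differentiable at `0` and solves the implied volatility
equation near `0`, then
`I′(0) = (N(−I(0)√t/2) − ∫ N(l_t^z − σ̄√(zt)/2) dμ(z)) / N′(−I(0)√t/2)`. -/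
theorem stmt16 (α kbar σbar ηbar β δ : ℝ) (hα : α ∈ Set.Ioo (0:ℝ) 1)
    (hk : 0 < kbar) (hσ : 0 < σbar) (hη : 0 < ηbar)
    (t : ℝ) (ht : 0 < t)
    (μ : Measure ℝ) [IsProbabilityMeasure μ] (hsupp : μ (Set.Iio 0) = 0)
    (hlap : ∀ u ≥ 0, (∫ x, Real.exp (-u * x) ∂μ) = ATSLaplace α kbar β t u)
    (I : ℝ → ℝ) (hIpos : ∀ y, 0 < I y) (I' : ℝ) (hI : HasDerivAt I I' 0)
    (heq : ∀ᶠ y in 𝓝 (0:ℝ),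
      (∫ z, (Real.exp (ATSphi α kbar σbar ηbar β δ t * t -
              t * σbar ^ 2 * (ηbar * t ^ δ) * z) *
            stdN (-(y / (σbar * Real.sqrt z)) + ATSl α kbar σbar ηbar β δ t z +
              σbar * Real.sqrt (z * t) / 2) -
          Real.exp (y * Real.sqrt t) *
            stdN (-(y / (σbar * Real.sqrt z)) + ATSl α kbar σbar ηbar β δ t z -
              σbar * Real.sqrt (z * t) / 2)) ∂μ) =
        stdN (-(y / I y) + I y * Real.sqrt t / 2) -
          Real.exp (y * Real.sqrt t) * stdN (-(y / I y) - I y * Real.sqrt t / 2)) :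
    I' = (stdN (-(I 0 * Real.sqrt t / 2)) -
        ∫ z, stdN (ATSl α kbar σbar ηbar β δ t z - σbar * Real.sqrt (z * t) / 2) ∂μ) /
      stdNd (-(I 0 * Real.sqrt t / 2)) := by
  have hae : ∀ᵐ z ∂μ, 0 ≤ z := by
    rw [ae_iff]
    have : {z : ℝ | ¬ 0 ≤ z} = Set.Iio 0 := by ext z; simp [not_le]
    rw [this]; exact hsupp
  have hη' : 0 < ηbar * t ^ δ := mul_pos hη (Real.rpow_pos_of_pos ht δ)
  -- measurability of integrands in z
  have hmf : ∀ y : ℝ, AEStronglyMeasurable (fun z : ℝ =>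
      Real.exp (ATSphi α kbar σbar ηbar β δ t * t - t * σbar ^ 2 * (ηbar * t ^ δ) * z) *
        stdN (-(y / (σbar * Real.sqrt z)) + ATSl α kbar σbar ηbar β δ t z +
          σbar * Real.sqrt (z * t) / 2) -
      Real.exp (y * Real.sqrt t) *
        stdN (-(y / (σbar * Real.sqrt z)) + ATSl α kbar σbar ηbar β δ t z -
          σbar * Real.sqrt (z * t) / 2)) μ := by
    intro y
    apply Measurable.aestronglyMeasurable
    apply Measurable.sub
    · apply Measurable.mul
      · fun_prop
      · apply continuous_stdN.measurable.comp
        have := measurable_arg α kbar σbar ηbar β δ t y (σbar / 2)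
        convert this using 2 with z
        ring
    · apply Measurable.const_mul
      apply continuous_stdN.measurable.comp
      have := measurable_arg α kbar σbar ηbar β δ t y (-(σbar / 2))
      convert this using 2 with z
      ring
  have hmf' : ∀ y : ℝ, AEStronglyMeasurable (fun z : ℝ =>
      -Real.sqrt t * Real.exp (y * Real.sqrt t) *
        stdN (-(y / (σbar * Real.sqrt z)) + ATSl α kbar σbar ηbar β δ t z -
          σbar * Real.sqrt (z * t) / 2)) μ := by
    intro y
    apply Measurable.aestronglyMeasurable
    apply Measurable.const_mul
    apply continuous_stdN.measurable.comp
    have := measurable_arg α kbar σbar ηbar β δ t y (-(σbar / 2))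
    convert this using 2 with z
    ring
  -- integrability of F 0
  have hF_int : Integrable (fun z : ℝ =>
      Real.exp (ATSphi α kbar σbar ηbar β δ t * t - t * σbar ^ 2 * (ηbar * t ^ δ) * z) *
        stdN (-((0:ℝ) / (σbar * Real.sqrt z)) + ATSl α kbar σbar ηbar β δ t z +
          σbar * Real.sqrt (z * t) / 2) -
      Real.exp ((0:ℝ) * Real.sqrt t) *
        stdN (-((0:ℝ) / (σbar * Real.sqrt z)) + ATSl α kbar σbar ηbar β δ t z -
          σbar * Real.sqrt (z * t) / 2)) μ := by
    apply Integrable.mono' (integrable_const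
      (Real.exp (ATSphi α kbar σbar ηbar β δ t * t) + 1)) (hmf 0)
    filter_upwards [hae] with z hz
    have hEz : Real.exp (ATSphi α kbar σbar ηbar β δ t * t -
        t * σbar ^ 2 * (ηbar * t ^ δ) * z) ≤ Real.exp (ATSphi α kbar σbar ηbar β δ t * t) := by
      apply Real.exp_le_exp.2
      have : 0 ≤ t * σbar ^ 2 * (ηbar * t ^ δ) * z :=
        mul_nonneg (mul_nonneg (mul_nonneg ht.le (sq_nonneg _)) hη'.le) hz
      linarith
    have hE0 : 0 < Real.exp (ATSphi α kbar σbar ηbar β δ t * t -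
        t * σbar ^ 2 * (ηbar * t ^ δ) * z) := Real.exp_pos _
    have hN1 := stdN_nonneg (-((0:ℝ) / (σbar * Real.sqrt z)) + ATSl α kbar σbar ηbar β δ t z +
      σbar * Real.sqrt (z * t) / 2)
    have hN2 := stdN_le_one (-((0:ℝ) / (σbar * Real.sqrt z)) + ATSl α kbar σbar ηbar β δ t z +
      σbar * Real.sqrt (z * t) / 2)
    have hN3 := stdN_nonneg (-((0:ℝ) / (σbar * Real.sqrt z)) + ATSl α kbar σbar ηbar β δ t z -
      σbar * Real.sqrt (z * t) / 2)
    have hN4 := stdN_le_one (-((0:ℝ) / (σbar * Real.sqrt z)) + ATSl α kbar σbar ηbar β δ t z -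
      σbar * Real.sqrt (z * t) / 2)
    rw [Real.norm_eq_abs, abs_le]
    rw [show ((0:ℝ) * Real.sqrt t) = 0 by ring, Real.exp_zero]
    constructor <;> nlinarith [Real.exp_pos (ATSphi α kbar σbar ηbar β δ t * t)]
  -- dominated derivative
  have h_bound : ∀ᵐ z ∂μ, ∀ y ∈ Metric.ball (0:ℝ) 1,
      ‖-Real.sqrt t * Real.exp (y * Real.sqrt t) *
        stdN (-(y / (σbar * Real.sqrt z)) + ATSl α kbar σbar ηbar β δ t z -
          σbar * Real.sqrt (z * t) / 2)‖ ≤ Real.sqrt t * Real.exp (Real.sqrt t) := by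
    filter_upwards with z
    intro y hy
    rw [mem_ball_zero_iff, Real.norm_eq_abs] at hy
    have hst : (0:ℝ) ≤ Real.sqrt t := Real.sqrt_nonneg t
    have he : Real.exp (y * Real.sqrt t) ≤ Real.exp (Real.sqrt t) := by
      apply Real.exp_le_exp.2
      nlinarith [abs_lt.1 hy]
    have hN0 := stdN_nonneg (-(y / (σbar * Real.sqrt z)) + ATSl α kbar σbar ηbar β δ t z -
      σbar * Real.sqrt (z * t) / 2)
    have hN1 := stdN_le_one (-(y / (σbar * Real.sqrt z)) + ATSl α kbar σbar ηbar β δ t z -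
      σbar * Real.sqrt (z * t) / 2)
    rw [Real.norm_eq_abs, abs_mul, abs_mul, abs_neg, abs_of_nonneg hst,
      abs_of_nonneg (Real.exp_pos _).le, abs_of_nonneg hN0]
    calc Real.sqrt t * Real.exp (y * Real.sqrt t) *
          stdN (-(y / (σbar * Real.sqrt z)) + ATSl α kbar σbar ηbar β δ t z -
            σbar * Real.sqrt (z * t) / 2)
        ≤ Real.sqrt t * Real.exp (y * Real.sqrt t) * 1 :=
          mul_le_mul_of_nonneg_left hN1 (by positivity)
      _ = Real.sqrt t * Real.exp (y * Real.sqrt t) := mul_one _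
      _ ≤ Real.sqrt t * Real.exp (Real.sqrt t) := mul_le_mul_of_nonneg_left he hst
  have h_diff : ∀ᵐ z ∂μ, ∀ y ∈ Metric.ball (0:ℝ) 1,
      HasDerivAt (fun y : ℝ =>
        Real.exp (ATSphi α kbar σbar ηbar β δ t * t - t * σbar ^ 2 * (ηbar * t ^ δ) * z) *
          stdN (-(y / (σbar * Real.sqrt z)) + ATSl α kbar σbar ηbar β δ t z +
            σbar * Real.sqrt (z * t) / 2) -
        Real.exp (y * Real.sqrt t) *
          stdN (-(y / (σbar * Real.sqrt z)) + ATSl α kbar σbar ηbar β δ t z -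
            σbar * Real.sqrt (z * t) / 2))
        (-Real.sqrt t * Real.exp (y * Real.sqrt t) *
          stdN (-(y / (σbar * Real.sqrt z)) + ATSl α kbar σbar ηbar β δ t z -
            σbar * Real.sqrt (z * t) / 2)) y := by
    filter_upwards with z
    intro y _
    exact hasDerivAt_integrand α kbar σbar ηbar β δ t hσ ht.le z y
  have hmain := (hasDerivAt_integral_of_dominated_loc_of_deriv_le (μ := μ)
    (F := fun y z =>
      Real.exp (ATSphi α kbar σbar ηbar β δ t * t - t * σbar ^ 2 * (ηbar * t ^ δ) * z) *
        stdN (-(y / (σbar * Real.sqrt z)) + ATSl α kbar σbar ηbar β δ t z +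
          σbar * Real.sqrt (z * t) / 2) -
      Real.exp (y * Real.sqrt t) *
        stdN (-(y / (σbar * Real.sqrt z)) + ATSl α kbar σbar ηbar β δ t z -
          σbar * Real.sqrt (z * t) / 2))
    (F' := fun y z =>
      -Real.sqrt t * Real.exp (y * Real.sqrt t) *
        stdN (-(y / (σbar * Real.sqrt z)) + ATSl α kbar σbar ηbar β δ t z -
          σbar * Real.sqrt (z * t) / 2))
    (x₀ := 0) (bound := fun _ => Real.sqrt t * Real.exp (Real.sqrt t))
    (Metric.ball_mem_nhds 0 one_pos) (Eventually.of_forall hmf) hF_int (hmf' 0) h_bound (integrable_const _) h_diff).2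
  -- derivative of RHS
  have hI0 : I 0 ≠ 0 := (hIpos 0).ne'
  have hdiv : HasDerivAt (fun y : ℝ => y / I y) ((1 * I 0 - 0 * I') / I 0 ^ 2) 0 := by
    have := (hasDerivAt_id (0:ℝ)).div hI hI0
    exact this
  have ha1 : HasDerivAt (fun y : ℝ => -(y / I y) + I y * Real.sqrt t / 2)
      (-((1 * I 0 - 0 * I') / I 0 ^ 2) + I' * Real.sqrt t / 2) 0 :=
    (hdiv.neg).add ((hI.mul_const (Real.sqrt t)).div_const 2)
  have ha2 : HasDerivAt (fun y : ℝ => -(y / I y) - I y * Real.sqrt t / 2)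
      (-((1 * I 0 - 0 * I') / I 0 ^ 2) - I' * Real.sqrt t / 2) 0 :=
    (hdiv.neg).sub ((hI.mul_const (Real.sqrt t)).div_const 2)
  have hexp0 : HasDerivAt (fun y : ℝ => Real.exp (y * Real.sqrt t))
      (Real.exp ((0:ℝ) * Real.sqrt t) * Real.sqrt t) 0 :=
    by simpa using ((hasDerivAt_id (0:ℝ)).mul_const (Real.sqrt t)).exp
  have hstd1 : HasDerivAt (fun y : ℝ => stdN (-(y / I y) + I y * Real.sqrt t / 2))
      (stdNd (-((0:ℝ) / I 0) + I 0 * Real.sqrt t / 2) *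
        (-((1 * I 0 - 0 * I') / I 0 ^ 2) + I' * Real.sqrt t / 2)) 0 :=
    (hasDerivAt_stdN _).comp 0 ha1
  have hstd2 : HasDerivAt (fun y : ℝ => stdN (-(y / I y) - I y * Real.sqrt t / 2))
      (stdNd (-((0:ℝ) / I 0) - I 0 * Real.sqrt t / 2) *
        (-((1 * I 0 - 0 * I') / I 0 ^ 2) - I' * Real.sqrt t / 2)) 0 :=
    (hasDerivAt_stdN _).comp 0 ha2
  have hGd := hstd1.sub (hexp0.mul hstd2)
  have hFd := hGd.congr_of_eventuallyEq heq
  have key := hmain.unique hFd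
  -- simplify
  simp only [zero_mul, Real.exp_zero, one_mul, mul_one, zero_div, neg_zero, zero_add,
    zero_sub] at key
  rw [MeasureTheory.integral_const_mul] at key
  have hev : stdNd (I 0 * Real.sqrt t / 2) = stdNd (-(I 0 * Real.sqrt t / 2)) :=
    (stdNd_neg _).symm
  rw [hev] at key
  have hstne : Real.sqrt t ≠ 0 := (Real.sqrt_pos.2 ht).ne'
  rw [eq_div_iff (stdNd_pos _).ne']
  apply mul_left_cancel₀ hstne
  linear_combination -key
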